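/- Let T be a t-norm that is general pseudo-homogeneous for F. If F(x,1)=x for all x∈[0,1], then T=min. -/
import Mathlib


open Set Filter Topology

def IsTnorm (T : ℝ → ℝ → ℝ) : Prop :=
  (∀ x ∈ Set.Icc (0:ℝ) 1, ∀ y ∈ Set.Icc (0:ℝ) 1, T x y ∈ Set.Icc (0:ℝ) 1) ∧
  (∀ x ∈ Set.Icc (0:ℝ) 1, ∀ y ∈ Set.Icc (0:ℝ) 1, T x y = T y x) ∧
  (∀ x ∈ Set.Icc (0:ℝ) 1, ∀ y ∈ Set.Icc (0:ℝ) 1, ∀ z ∈ Set.Icc (0:ℝ) 1,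
      T x (T y z) = T (T x y) z) ∧
  (∀ x ∈ Set.Icc (0:ℝ) 1, ∀ y ∈ Set.Icc (0:ℝ) 1, ∀ z ∈ Set.Icc (0:ℝ) 1,
      y ≤ z → T x y ≤ T x z) ∧
  (∀ x ∈ Set.Icc (0:ℝ) 1, T x 1 = x)

def IsGPH (T F : ℝ → ℝ → ℝ) : Prop :=
  ∀ lam ∈ Set.Icc (0:ℝ) 1, ∀ x ∈ Set.Icc (0:ℝ) 1, ∀ y ∈ Set.Icc (0:ℝ) 1,
    T (lam * x) (lam * y) = F lam (T x y)

noncomputable def TD : ℝ → ℝ → ℝ := fun x y => if max x y = 1 then min x y else 0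

theorem F_boundary_implies_min (T F : ℝ → ℝ → ℝ) (hT : IsTnorm T) (h : IsGPH T F)
    (hb : ∀ x ∈ Set.Icc (0:ℝ) 1, F x 1 = x) :
    ∀ x ∈ Set.Icc (0:ℝ) 1, ∀ y ∈ Set.Icc (0:ℝ) 1, T x y = min x y := by
  obtain ⟨hrange, hcomm, hassoc, hmono, hunit⟩ := hT
  have h1 : (1:ℝ) ∈ Set.Icc (0:ℝ) 1 := by constructor <;> norm_num
  have hT11 : T 1 1 = 1 := hunit 1 h1
  have hidem : ∀ a ∈ Set.Icc (0:ℝ) 1, T a a = a := by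
    intro a ha
    have := h a ha 1 h1 1 h1
    rw [hT11, hb a ha, mul_one] at this
    exact this
  intro x hx y hy
  rcases le_total x y with hxy | hxy
  · have hle : T x y ≤ x := by
      have := hmono x hx y hy 1 h1 hy.2
      rw [hunit x hx] at this
      exact this
    have hge : x ≤ T x y := by
      have := hmono x hx x hx y hy hxy
      rw [hidem x hx] at this
      exact this
    rw [min_eq_left hxy]
    linarith
  · have hle : T x y ≤ y := by
      have := hmono y hy x hx 1 h1 hx.2
      rw [hunit y hy, hcomm y hy x hx] at this
      exact this
    have hge : y ≤ T x y := by
      have := hmono x hx y hy y hy (le_refl y)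
      have h2 := hmono y hy y hy x hx hxy
      rw [hidem y hy, hcomm y hy x hx] at h2
      exact h2
    rw [min_eq_right hxy]
    linarith
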